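/- Suppose Q is in rational normal form with parameters z and k_1,…,k_d, and γ is generic. If α is a normalized 2-cocycle on g(γ,Q) with m∈R and n∈ℤ^d∖R, then (γ|n)·α(L_{m+n},L_{−m−n}) = (γ|m+n)·α(L_n,L_{−n}); in particular the diagonal values of α on ℤ^d∖R are determined by its values on Γ={n∈ℤ^d∖R : 0≤n_i<k_i for all 1≤i≤d}. -/
import Mathlib


open scoped BigOperators

namespace QTorus

/-- σ(m,n) = ∏_{i<j} q_{ji}^{m_j n_i}. -/
noncomputable def qsigma (d : ℕ) (Q : Matrix (Fin d) (Fin d) ℂ) (m n : Fin d → ℤ) : ℂ :=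
  ∏ i : Fin d, ∏ j : Fin d, if i < j then Q j i ^ (m j * n i) else 1

/-- The radical subgroup R = {m | σ(m,n)=σ(n,m) for all n}. -/
def Rset (d : ℕ) (Q : Matrix (Fin d) (Fin d) ℂ) : Set (Fin d → ℤ) :=
  {m | ∀ n : Fin d → ℤ, qsigma d Q m n = qsigma d Q n m}

/-- (γ|m) = ∑ γ_i m_i. -/
noncomputable def ip (d : ℕ) (γ : Fin d → ℂ) (m : Fin d → ℤ) : ℂ :=
  ∑ i : Fin d, γ i * (m i : ℂ)

/-- The underlying vector space of g(γ,Q): formal ℂ-linear combinations of basis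
vectors indexed by ℤ^d. -/
abbrev g (d : ℕ) := (Fin d → ℤ) →₀ ℂ

/-- The basis vector L_m. -/
noncomputable def L (d : ℕ) (m : Fin d → ℤ) : g d := Finsupp.single m 1

/-- Hypotheses on the matrix Q: nonzero entries, q_{ii}=1, q_{ij}q_{ji}=1. -/
def QOk (d : ℕ) (Q : Matrix (Fin d) (Fin d) ℂ) : Prop :=
  (∀ i, Q i i = 1) ∧ (∀ i j, Q i j * Q j i = 1) ∧ (∀ i j, Q i j ≠ 0)

/-- γ is generic: γ_1,…,γ_d are linearly independent over ℚ. -/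
def Generic (d : ℕ) (γ : Fin d → ℂ) : Prop := LinearIndependent ℚ γ

open Classical in
/-- Structure constants of g(γ,Q): [L_m, L_n] = sc(m,n) • L_{m+n}. -/
noncomputable def sc (d : ℕ) (Q : Matrix (Fin d) (Fin d) ℂ) (γ : Fin d → ℂ)
    (m n : Fin d → ℤ) : ℂ :=
  if m ∈ Rset d Q then
    (if n ∈ Rset d Q then qsigma d Q m n * ip d γ (n - m)
     else qsigma d Q m n * ip d γ n)
  else
    (if n ∈ Rset d Q then -(qsigma d Q n m * ip d γ m)
     else qsigma d Q m n - qsigma d Q n m)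

/-- The bracket of g(γ,Q), as the bilinear extension of
[L_m, L_n] = sc(m,n) • L_{m+n}. -/
noncomputable def br (d : ℕ) (Q : Matrix (Fin d) (Fin d) ℂ) (γ : Fin d → ℂ)
    (x y : g d) : g d :=
  x.sum fun m a => y.sum fun n b => Finsupp.single (m + n) (a * b * sc d Q γ m n)

/-- A Lie algebra automorphism of g(γ,Q): a linear equivalence preserving the bracket. -/
def IsAut (d : ℕ) (Q : Matrix (Fin d) (Fin d) ℂ) (γ : Fin d → ℂ)
    (θ : g d ≃ₗ[ℂ] g d) : Prop :=
  ∀ x y : g d, θ (br d Q γ x y) = br d Q γ (θ x) (θ y)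

/-- A derivation of g(γ,Q). -/
def IsDer (d : ℕ) (Q : Matrix (Fin d) (Fin d) ℂ) (γ : Fin d → ℂ)
    (D : g d →ₗ[ℂ] g d) : Prop :=
  ∀ x y : g d, D (br d Q γ x y) = br d Q γ (D x) y + br d Q γ x (D y)

open Classical in
/-- δ(n,R) = 1 if n ∈ R, 0 otherwise. -/
noncomputable def deltaR (d : ℕ) (Q : Matrix (Fin d) (Fin d) ℂ) (n : Fin d → ℤ) : ℕ :=
  if n ∈ Rset d Q then 1 else 0

/-- A 2-cocycle on g(γ,Q). -/
def IsCocycle (d : ℕ) (Q : Matrix (Fin d) (Fin d) ℂ) (γ : Fin d → ℂ)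
    (α : g d →ₗ[ℂ] g d →ₗ[ℂ] ℂ) : Prop :=
  (∀ x y : g d, α x y = - α y x) ∧
  (∀ x y z : g d,
    α (br d Q γ x y) z + α (br d Q γ z x) y + α (br d Q γ y z) x = 0)

/-- i ↔ j is one of the exceptional index pairs (2l-1,2l) (1-based) of the rational
normal form. Here indices are 0-based. -/
def OffDiagPair (z : ℕ) (i j : ℕ) : Prop :=
  ∃ l : ℕ, l < z ∧ ((i = 2 * l ∧ j = 2 * l + 1) ∨ (i = 2 * l + 1 ∧ j = 2 * l))

/-- Q is in rational normal form with parameters z and k_1,…,k_d (0-based indexing: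
the paper's pair (2i-1,2i) is the Lean pair (2l, 2l+1) with l = i-1). -/
def IsRNF (d : ℕ) (Q : Matrix (Fin d) (Fin d) ℂ) (z : ℕ) (k : Fin d → ℕ) : Prop :=
  0 < z ∧ 2 * z ≤ d ∧
  (∀ i j : Fin d, ¬ OffDiagPair z i.val j.val → Q i j = 1) ∧
  (∀ (l : ℕ) (_ : l < z) (hi : 2 * l < d) (hj : 2 * l + 1 < d),
      IsPrimitiveRoot (Q ⟨2 * l, hi⟩ ⟨2 * l + 1, hj⟩) (k ⟨2 * l, hi⟩) ∧
      Q ⟨2 * l + 1, hj⟩ ⟨2 * l, hi⟩ = (Q ⟨2 * l, hi⟩ ⟨2 * l + 1, hj⟩)⁻¹ ∧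
      k ⟨2 * l + 1, hj⟩ = k ⟨2 * l, hi⟩ ∧
      1 < k ⟨2 * l, hi⟩) ∧
  (∀ (i : ℕ) (_ : i + 1 < 2 * z) (h1 : i < d) (h2 : i + 1 < d),
      k ⟨i + 1, h2⟩ ∣ k ⟨i, h1⟩) ∧
  (∀ i : Fin d, 2 * z ≤ i.val → k i = 1)

/-- The vector k_1 e_1 ∈ ℤ^d. -/
noncomputable def k1e1 (d : ℕ) (k : Fin d → ℕ) (hd : 0 < d) : Fin d → ℤ :=
  Pi.single ⟨0, hd⟩ (k ⟨0, hd⟩ : ℤ)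

/-- A 2-cocycle is normalized if α(L_{m-k₁e₁}, L_{k₁e₁})=0 for m ∈ R, m ≠ 2k₁e₁,
α(L_0, L_{2k₁e₁})=0, α(L_0, L_s)=0 for s ∉ R, and α(L_m,L_n)=0 whenever m+n ≠ 0. -/
def IsNormalized (d : ℕ) (Q : Matrix (Fin d) (Fin d) ℂ) (k : Fin d → ℕ) (hd : 0 < d)
    (α : g d →ₗ[ℂ] g d →ₗ[ℂ] ℂ) : Prop :=
  (∀ m ∈ Rset d Q, m ≠ 2 • k1e1 d k hd →
      α (L d (m - k1e1 d k hd)) (L d (k1e1 d k hd)) = 0) ∧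
  α (L d 0) (L d (2 • k1e1 d k hd)) = 0 ∧
  (∀ s, s ∉ Rset d Q → α (L d 0) (L d s) = 0) ∧
  (∀ m n : Fin d → ℤ, m + n ≠ 0 → α (L d m) (L d n) = 0)

/-- The degree derivation ∂_i, acting by ∂_i(L_m) = m_i L_m. -/
noncomputable def deg (d : ℕ) (i : Fin d) (y : g d) : g d :=
  y.sum fun m a => Finsupp.single m ((m i : ℂ) * a)

open Classical in
/-- The 2-cocycle α₁: α₁(L_m,L_n) = δ_{m+n,0}((m_γ)³-m_γ)/12 for m ∈ R, 0 otherwise,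
where m_γ = (γ|m)/(γ|k₁e₁). -/
noncomputable def alpha1 (d : ℕ) (Q : Matrix (Fin d) (Fin d) ℂ) (γ : Fin d → ℂ)
    (k : Fin d → ℕ) (hd : 0 < d) (x y : g d) : ℂ :=
  x.sum fun m a => y.sum fun n b => a * b *
    (if m ∈ Rset d Q ∧ m + n = 0 then
       ((ip d γ m / ip d γ (k1e1 d k hd)) ^ 3 - ip d γ m / ip d γ (k1e1 d k hd)) / 12
     else 0)

open Classical in
/-- The 2-cocycle α₂: α₂(L_r,L_s) = δ_{r+s,0} σ(r,-r)(γ|r)/(γ|k₁e₁) for r ∉ R,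
0 otherwise. -/
noncomputable def alpha2 (d : ℕ) (Q : Matrix (Fin d) (Fin d) ℂ) (γ : Fin d → ℂ)
    (k : Fin d → ℕ) (hd : 0 < d) (x y : g d) : ℂ :=
  x.sum fun m a => y.sum fun n b => a * b *
    (if m ∉ Rset d Q ∧ m + n = 0 then
       qsigma d Q m (-m) * (ip d γ m / ip d γ (k1e1 d k hd))
     else 0)

end QTorus


namespace QTorus

/-- membership in the radical, concretely -/
def InR (d z : ℕ) (k : Fin d → ℕ) (m : Fin d → ℤ) : Prop :=
  ∀ (l : ℕ), l < z → ∀ (h1 : 2*l < d) (h2 : 2*l+1 < d),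
    (k ⟨2*l, h1⟩ : ℤ) ∣ m ⟨2*l, h1⟩ ∧ (k ⟨2*l, h1⟩ : ℤ) ∣ m ⟨2*l+1, h2⟩

variable {d z : ℕ} {Q : Matrix (Fin d) (Fin d) ℂ} {k : Fin d → ℕ}

lemma Q_eq_one (hRNF : IsRNF d Q z k) {i j : Fin d} (hij : i < j)
    (h : ¬ ∃ l, l < z ∧ (j:ℕ) = 2*l+1 ∧ (i:ℕ) = 2*l) : Q j i = 1 := by
  apply hRNF.2.2.1
  rintro ⟨l, hl, ⟨h1, h2⟩ | ⟨h1, h2⟩⟩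
  · exact absurd (Fin.lt_def.mp hij) (by omega)
  · exact h ⟨l, hl, h1, h2⟩

lemma zpow_eq_one_of_dvd {q : ℂ} {N : ℕ} (hq : q ^ N = 1) {a : ℤ} (h : (N:ℤ) ∣ a) :
    q ^ a = 1 := by
  obtain ⟨c, rfl⟩ := h
  rw [zpow_mul, zpow_natCast, hq, one_zpow]

lemma qsigma_eq_one_left (hRNF : IsRNF d Q z k) {m : Fin d → ℤ}
    (hm : InR d z k m) (n : Fin d → ℤ) : qsigma d Q m n = 1 := by
  refine Finset.prod_eq_one fun i _ => Finset.prod_eq_one fun j _ => ?_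
  split_ifs with hij
  · by_cases hp : ∃ l, l < z ∧ (j:ℕ) = 2*l+1 ∧ (i:ℕ) = 2*l
    · obtain ⟨l, hl, hj1, hi1⟩ := hp
      have h1 : 2*l < d := hi1 ▸ i.isLt
      have h2 : 2*l+1 < d := hj1 ▸ j.isLt
      have hi2 : i = ⟨2*l, h1⟩ := Fin.ext hi1
      have hj2 : j = ⟨2*l+1, h2⟩ := Fin.ext hj1
      subst hi2 hj2
      obtain ⟨hprim, hinv, -, -⟩ := hRNF.2.2.2.1 l hl h1 h2
      have hdvd := (hm l hl h1 h2).2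
      rw [hinv, zpow_mul, inv_zpow,
        zpow_eq_one_of_dvd hprim.pow_eq_one hdvd, inv_one, one_zpow]
    · rw [Q_eq_one hRNF hij hp, one_zpow]
  · rfl

lemma qsigma_eq_one_right (hRNF : IsRNF d Q z k) {m : Fin d → ℤ}
    (hm : InR d z k m) (n : Fin d → ℤ) : qsigma d Q n m = 1 := by
  refine Finset.prod_eq_one fun i _ => Finset.prod_eq_one fun j _ => ?_
  split_ifs with hij
  · by_cases hp : ∃ l, l < z ∧ (j:ℕ) = 2*l+1 ∧ (i:ℕ) = 2*l
    · obtain ⟨l, hl, hj1, hi1⟩ := hp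
      have h1 : 2*l < d := hi1 ▸ i.isLt
      have h2 : 2*l+1 < d := hj1 ▸ j.isLt
      have hi2 : i = ⟨2*l, h1⟩ := Fin.ext hi1
      have hj2 : j = ⟨2*l+1, h2⟩ := Fin.ext hj1
      subst hi2 hj2
      obtain ⟨hprim, hinv, -, -⟩ := hRNF.2.2.2.1 l hl h1 h2
      have hdvd := (hm l hl h1 h2).1
      rw [hinv, mul_comm (n _), zpow_mul, inv_zpow,
        zpow_eq_one_of_dvd hprim.pow_eq_one hdvd, inv_one, one_zpow]
    · rw [Q_eq_one hRNF hij hp, one_zpow]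
  · rfl

lemma mem_Rset_of_InR (hRNF : IsRNF d Q z k) {m : Fin d → ℤ}
    (hm : InR d z k m) : m ∈ Rset d Q := fun n => by
  rw [qsigma_eq_one_left hRNF hm, qsigma_eq_one_right hRNF hm]

lemma qsigma_single_right (m : Fin d → ℤ) (e : Fin d) (c : ℤ) :
    qsigma d Q m (Pi.single e c) = ∏ j, if e < j then Q j e ^ (m j * c) else 1 := by
  rw [qsigma, Finset.prod_eq_single e]
  · simp
  · intro i _ hi
    refine Finset.prod_eq_one fun j _ => ?_
    rw [Pi.single_eq_of_ne hi]
    split_ifs <;> simp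
  · simp

lemma qsigma_single_left (m : Fin d → ℤ) (e : Fin d) (c : ℤ) :
    qsigma d Q (Pi.single e c) m = ∏ i, if i < e then Q e i ^ (c * m i) else 1 := by
  rw [qsigma, Finset.prod_comm, Finset.prod_eq_single e]
  · simp
  · intro j _ hj
    refine Finset.prod_eq_one fun i _ => ?_
    rw [Pi.single_eq_of_ne hj]
    split_ifs <;> simp
  · simp

lemma InR_of_mem_Rset (hRNF : IsRNF d Q z k) {m : Fin d → ℤ}
    (hm : m ∈ Rset d Q) : InR d z k m := by
  intro l hl h1 h2
  set e0 : Fin d := ⟨2*l, h1⟩ with he0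
  set e1 : Fin d := ⟨2*l+1, h2⟩ with he1
  obtain ⟨hprim, hinv, hkeq, hk1⟩ := hRNF.2.2.2.1 l hl h1 h2
  have he01 : e0 < e1 := by simp [he0, he1, Fin.lt_def]
  constructor
  · -- use n = single e1 1
    have h := hm (Pi.single e1 1)
    rw [qsigma_single_right, qsigma_single_left] at h
    have hL : (∏ j, if e1 < j then Q j e1 ^ (m j * 1) else 1) = 1 := by
      refine Finset.prod_eq_one fun j _ => ?_
      split_ifs with hj
      · rw [Q_eq_one hRNF hj, one_zpow]
        rintro ⟨l', hl', hj1, hi1⟩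
        simp only [he1] at hi1
        omega
      · rfl
    have hR : (∏ i, if i < e1 then Q e1 i ^ (1 * m i) else 1)
        = Q e1 e0 ^ (1 * m e0) := by
      rw [Finset.prod_eq_single e0]
      · rw [if_pos he01]
      · intro i _ hi
        split_ifs with hii
        · rw [Q_eq_one hRNF hii, one_zpow]
          rintro ⟨l', hl', hj1, hi1⟩
          simp only [he1] at hj1
          apply hi
          apply Fin.ext
          show (i:ℕ) = 2*l
          omega
        · rfl
      · simp [he01]
    rw [hL, hR, hinv, one_mul, inv_zpow] at h
    exact (hprim.zpow_eq_one_iff_dvd _).mp (inv_eq_one.mp h.symm)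
  · -- use n = single e0 1
    have h := hm (Pi.single e0 1)
    rw [qsigma_single_right, qsigma_single_left] at h
    have hL : (∏ j, if e0 < j then Q j e0 ^ (m j * 1) else 1)
        = Q e1 e0 ^ (m e1 * 1) := by
      rw [Finset.prod_eq_single e1]
      · rw [if_pos he01]
      · intro j _ hj
        split_ifs with hjj
        · rw [Q_eq_one hRNF hjj, one_zpow]
          rintro ⟨l', hl', hj1, hi1⟩
          simp only [he0] at hi1
          apply hj
          apply Fin.ext
          show (j:ℕ) = 2*l+1
          omega
        · rfl
      · simp [he01]
    have hR : (∏ i, if i < e0 then Q e0 i ^ (1 * m i) else 1) = 1 := by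
      refine Finset.prod_eq_one fun i _ => ?_
      split_ifs with hii
      · rw [Q_eq_one hRNF hii, one_zpow]
        rintro ⟨l', hl', hj1, hi1⟩
        simp only [he0] at hj1
        omega
      · rfl
    rw [hL, hR, hinv, mul_one, inv_zpow, inv_eq_one] at h
    exact (hprim.zpow_eq_one_iff_dvd _).mp h

lemma InR_sub {m n : Fin d → ℤ} (hm : InR d z k m) (hn : InR d z k n) :
    InR d z k (m - n) := by
  intro l hl h1 h2
  obtain ⟨a1, a2⟩ := hm l hl h1 h2
  obtain ⟨b1, b2⟩ := hn l hl h1 h2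
  exact ⟨dvd_sub a1 b1, dvd_sub a2 b2⟩

lemma InR_neg {m : Fin d → ℤ} (hm : InR d z k m) : InR d z k (-m) := by
  intro l hl h1 h2
  obtain ⟨a1, a2⟩ := hm l hl h1 h2
  exact ⟨dvd_neg.mpr a1, dvd_neg.mpr a2⟩

lemma InR_add {m n : Fin d → ℤ} (hm : InR d z k m) (hn : InR d z k n) :
    InR d z k (m + n) := by
  intro l hl h1 h2
  obtain ⟨a1, a2⟩ := hm l hl h1 h2
  obtain ⟨b1, b2⟩ := hn l hl h1 h2
  exact ⟨dvd_add a1 b1, dvd_add a2 b2⟩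

lemma qsigma_add_right (hQ : ∀ i j, Q i j ≠ 0) (m a b : Fin d → ℤ) :
    qsigma d Q m (a + b) = qsigma d Q m a * qsigma d Q m b := by
  rw [qsigma, qsigma, qsigma, ← Finset.prod_mul_distrib]
  refine Finset.prod_congr rfl fun i _ => ?_
  rw [← Finset.prod_mul_distrib]
  refine Finset.prod_congr rfl fun j _ => ?_
  split_ifs with h
  · rw [Pi.add_apply, mul_add, zpow_add₀ (hQ j i)]
  · rw [one_mul]

lemma qsigma_add_left (hQ : ∀ i j, Q i j ≠ 0) (m a b : Fin d → ℤ) :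
    qsigma d Q (a + b) m = qsigma d Q a m * qsigma d Q b m := by
  rw [qsigma, qsigma, qsigma, ← Finset.prod_mul_distrib]
  refine Finset.prod_congr rfl fun i _ => ?_
  rw [← Finset.prod_mul_distrib]
  refine Finset.prod_congr rfl fun j _ => ?_
  split_ifs with h
  · rw [Pi.add_apply, add_mul, zpow_add₀ (hQ j i)]
  · rw [one_mul]

lemma qsigma_neg_comm (n : Fin d → ℤ) :
    qsigma d Q n (-n) = qsigma d Q (-n) n := by
  refine Finset.prod_congr rfl fun i _ => Finset.prod_congr rfl fun j _ => ?_
  split_ifs with h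
  · rw [Pi.neg_apply, Pi.neg_apply, mul_neg, neg_mul]
  · rfl

lemma ip_add (γ : Fin d → ℂ) (a b : Fin d → ℤ) :
    ip d γ (a + b) = ip d γ a + ip d γ b := by
  rw [ip, ip, ip, ← Finset.sum_add_distrib]
  refine Finset.sum_congr rfl fun i _ => ?_
  rw [Pi.add_apply]
  push_cast
  ring

lemma ip_neg (γ : Fin d → ℂ) (a : Fin d → ℤ) : ip d γ (-a) = - ip d γ a := by
  rw [ip, ip, ← Finset.sum_neg_distrib]
  refine Finset.sum_congr rfl fun i _ => ?_
  rw [Pi.neg_apply]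
  push_cast
  ring

lemma br_L (Q : Matrix (Fin d) (Fin d) ℂ) (γ : Fin d → ℂ) (m n : Fin d → ℤ) :
    br d Q γ (L d m) (L d n) = Finsupp.single (m + n) (sc d Q γ m n) := by
  simp only [br, L]
  rw [Finsupp.sum_single_index]
  · rw [Finsupp.sum_single_index]
    · rw [one_mul, one_mul]
    · simp
  · rw [Finsupp.sum_single_index] <;> simp

lemma single_eq_smul (p : Fin d → ℤ) (c : ℂ) :
    (Finsupp.single p c : g d) = c • L d p := by
  rw [L, Finsupp.smul_single, smul_eq_mul, mul_one]

lemma kpos (hRNF : IsRNF d Q z k) (i : Fin d) : 0 < k i := by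
  by_cases h2 : 2*z ≤ i.val
  · rw [hRNF.2.2.2.2.2 i h2]; norm_num
  · push_neg at h2
    rcases Nat.even_or_odd i.val with ⟨l, hl⟩ | ⟨l, hl⟩
    · have hlz : l < z := by omega
      have h1 : 2*l < d := by have := i.isLt; omega
      have hv : 2*l+1 < d := by have := hRNF.2.1; omega
      have : i = ⟨2*l, h1⟩ := Fin.ext (by show (i:ℕ) = 2*l; omega)
      rw [this]
      have := (hRNF.2.2.2.1 l hlz h1 hv).2.2.2
      omega
    · have hlz : l < z := by omega
      have h1 : 2*l < d := by have := i.isLt; omega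
      have hv : 2*l+1 < d := by have := i.isLt; omega
      have : i = ⟨2*l+1, hv⟩ := Fin.ext (by show (i:ℕ) = 2*l+1; omega)
      rw [this]
      obtain ⟨-, -, hkeq, hk1⟩ := hRNF.2.2.2.1 l hlz h1 hv
      omega

lemma ip_ne_zero {γ : Fin d → ℂ} (hγ : Generic d γ) {x : Fin d → ℤ} (hx : x ≠ 0) :
    ip d γ x ≠ 0 := by
  intro h
  have key := Fintype.linearIndependent_iff.mp hγ (fun i => (x i : ℚ))
  have hz : ∑ i, (x i : ℚ) • γ i = 0 := by
    rw [← h, ip]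
    refine Finset.sum_congr rfl fun i _ => ?_
    rw [Rat.smul_def]
    push_cast
    ring
  apply hx
  funext i
  have := key hz i
  exact_mod_cast this

/-- Part (a) of the theorem, as a standalone lemma. -/
lemma parta (hQ : QOk d Q) (hRNF : IsRNF d Q z k) {γ : Fin d → ℂ}
    (α : g d →ₗ[ℂ] g d →ₗ[ℂ] ℂ) (hcoc : IsCocycle d Q γ α)
    {m : Fin d → ℤ} (hm : m ∈ Rset d Q) {n : Fin d → ℤ} (hn : n ∉ Rset d Q) :
    ip d γ n * α (L d (m + n)) (L d (-(m + n))) =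
      ip d γ (m + n) * α (L d n) (L d (-n)) := by
  have hmIn : InR d z k m := InR_of_mem_Rset hRNF hm
  have hp : m + n ∉ Rset d Q := by
    intro h
    apply hn
    have : InR d z k n := by
      have := InR_sub (InR_of_mem_Rset hRNF h) hmIn
      rwa [add_sub_cancel_left] at this
    exact mem_Rset_of_InR hRNF this
  have hnp : -(m + n) ∉ Rset d Q := by
    intro h
    apply hp
    have := InR_neg (InR_of_mem_Rset hRNF h)
    rw [neg_neg] at this
    exact mem_Rset_of_InR hRNF this
  have hsc1 : sc d Q γ m n = ip d γ n := by
    rw [sc, if_pos hm, if_neg hn, qsigma_eq_one_left hRNF hmIn, one_mul]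
  have hsc2 : sc d Q γ (-(m+n)) m = ip d γ (m + n) := by
    rw [sc, if_neg hnp, if_pos hm, qsigma_eq_one_left hRNF hmIn, one_mul,
      ip_neg, neg_neg]
  have hsc3 : sc d Q γ n (-(m+n)) = 0 := by
    rw [sc, if_neg hn, if_neg hnp]
    have e1 : (-(m+n) : Fin d → ℤ) = -m + -n := by abel
    rw [e1, qsigma_add_right hQ.2.2, qsigma_add_left hQ.2.2,
      qsigma_eq_one_right hRNF (InR_neg hmIn), qsigma_eq_one_left hRNF (InR_neg hmIn),
      one_mul, one_mul, qsigma_neg_comm, sub_self]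
  have hid := hcoc.2 (L d m) (L d n) (L d (-(m+n)))
  rw [br_L, br_L, br_L, hsc1, hsc2, hsc3] at hid
  have e2 : -(m+n) + m = -n := by abel
  rw [e2, single_eq_smul, single_eq_smul, single_eq_smul] at hid
  simp only [map_smul, LinearMap.smul_apply, smul_eq_mul, zero_smul, map_zero,
    LinearMap.zero_apply, add_zero] at hid
  have hskew := hcoc.1 (L d (-n)) (L d n)
  rw [hskew] at hid
  linear_combination hid
end QTorus

open QTorus

/-- for Q in rational normal form and γ generic: (a) every normalized
2-cocycle α satisfies (γ|n)·α(L_{m+n},L_{−m−n}) = (γ|m+n)·α(L_n,L_{−n}) for m ∈ R,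
n ∉ R; (b) in particular the diagonal values of α on ℤ^d∖R are determined by its
values on Γ = {n ∈ ℤ^d∖R : 0 ≤ n_i < k_i for all i}. -/
theorem stmt17 (d : ℕ) (hd1 : 1 < d) (hd : 0 < d)
    (Q : Matrix (Fin d) (Fin d) ℂ) (hQ : QOk d Q)
    (z : ℕ) (k : Fin d → ℕ) (hRNF : IsRNF d Q z k)
    (γ : Fin d → ℂ) (hγ : Generic d γ) :
    (∀ α : g d →ₗ[ℂ] g d →ₗ[ℂ] ℂ, IsCocycle d Q γ α → IsNormalized d Q k hd α →
      ∀ m ∈ Rset d Q, ∀ n ∉ Rset d Q,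
        ip d γ n * α (L d (m + n)) (L d (-(m + n))) =
          ip d γ (m + n) * α (L d n) (L d (-n))) ∧
    (∀ α β : g d →ₗ[ℂ] g d →ₗ[ℂ] ℂ,
      IsCocycle d Q γ α → IsNormalized d Q k hd α →
      IsCocycle d Q γ β → IsNormalized d Q k hd β →
      (∀ n : Fin d → ℤ, n ∉ Rset d Q → (∀ i, 0 ≤ n i ∧ n i < (k i : ℤ)) →
        α (L d n) (L d (-n)) = β (L d n) (L d (-n))) →
      ∀ n : Fin d → ℤ, n ∉ Rset d Q →
        α (L d n) (L d (-n)) = β (L d n) (L d (-n))) := by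
  constructor
  · intro α hcoc _hnorm m hm n hn
    exact parta (z := z) (k := k) hQ hRNF α hcoc hm hn
  · intro α β hcocα _ hcocβ _ hagree n hn
    set n' : Fin d → ℤ := fun i => n i % (k i : ℤ) with hn'def
    have hkpos : ∀ i : Fin d, (0:ℤ) < (k i : ℤ) := fun i => by
      exact_mod_cast kpos hRNF i
    have hbounds : ∀ i, 0 ≤ n' i ∧ n' i < (k i : ℤ) := fun i =>
      ⟨Int.emod_nonneg _ (ne_of_gt (hkpos i)), Int.emod_lt_of_pos _ (hkpos i)⟩
    have hInRm : InR d z k (n - n') := by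
      intro l hl h1 h2
      obtain ⟨-, -, hkeq, -⟩ := hRNF.2.2.2.1 l hl h1 h2
      constructor
      · exact Int.dvd_self_sub_of_emod_eq rfl
      · have : (k ⟨2*l+1, h2⟩ : ℤ) ∣ n ⟨2*l+1, h2⟩ - n' ⟨2*l+1, h2⟩ :=
          Int.dvd_self_sub_of_emod_eq rfl
        rwa [hkeq] at this
    have hmR : (n - n') ∈ Rset d Q := mem_Rset_of_InR hRNF hInRm
    have hsum : (n - n') + n' = n := sub_add_cancel n n'
    have hn'R : n' ∉ Rset d Q := by
      intro h
      apply hn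
      have := InR_add hInRm (InR_of_mem_Rset hRNF h)
      rw [hsum] at this
      exact mem_Rset_of_InR hRNF this
    have hn'ne : n' ≠ 0 := by
      intro h0
      apply hn
      have : n = n - n' := by rw [h0, sub_zero]
      rw [this]
      exact hmR
    have hipne : ip d γ n' ≠ 0 := ip_ne_zero hγ hn'ne
    have ha := parta (z := z) (k := k) hQ hRNF α hcocα hmR hn'R
    have hb := parta (z := z) (k := k) hQ hRNF β hcocβ hmR hn'R
    rw [hsum] at ha hb
    have hdiag := hagree n' hn'R hbounds
    apply mul_left_cancel₀ hipne
    rw [ha, hb, hdiag]
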